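/- arXiv:1303.3933 — 2 statements merged into one kernel-verified Lean document; each statement's English description precedes it below -/
import Mathlib

section
/- Let (x*,u*) be an admissible process for the linear-convex state-constrained problem (LC). Suppose there exist an absolutely continuous function p : [a,b] → ℝⁿ and a finite nonnegative Borel measure μ on [a,b] whose support is contained in {t ∈ [a,b] : D(t)x*(t) = 0}, such that, with q(t) := p(t) + ∫_{[a,t)} D(s)ᵀ μ(ds) for t ∈ [a,b) and q(b) := p(b) + ∫_{[a,b]} D(s)ᵀ μ(ds), the following hold: (i) for almost every t ∈ [a,b], for all x ∈ ℝⁿ and all u ∈ U(t), ⟨q(t), A(t)x + B(t)u⟩ − L(t,x,u) ≤ ⟨q(t), A(t)x*(t) + B(t)u*(t)⟩ − L(t,x*(t),u*(t)) + ⟨−ṗ(t), x − x*(t)⟩; (ii) for all (x_a, x_b) ∈ E, l(x_a, x_b) − l(x*(a), x*(b)) ≥ ⟨p(a), x_a − x*(a)⟩ − ⟨q(b), x_b − x*(b)⟩. Then (x*,u*) minimizes the cost l(x(a),x(b)) + ∫_a^b L(t,x(t),u(t)) dt over all admissible processes of (LC). -/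
open MeasureTheory Set Filter
open scoped InnerProductSpace

noncomputable section

/-- Shorthand for Euclidean space `ℝⁿ`. -/
abbrev Vec (n : ℕ) := EuclideanSpace ℝ (Fin n)

/-- An admissible process for the linear-convex state-constrained problem (LC) on `[a,b]`:
`x` is absolutely continuous (encoded via an integrable derivative `x'` and the integral
representation), `ẋ(t) = A(t)x(t) + B(t)u(t)` a.e., `u` is measurable with `u(t) ∈ U(t)`
a.e., the state constraint `D(t)x(t) ≤ 0` (with `D(t)` a row vector, acting via the inner
product) holds for all `t ∈ [a,b]`, the endpoints satisfy `(x(a), x(b)) ∈ E`, and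
`t ↦ L(t,x(t),u(t))` is integrable. -/
def AdmissibleLC {n k : ℕ} (a b : ℝ)
    (A : ℝ → Vec n →L[ℝ] Vec n) (B : ℝ → Vec k →L[ℝ] Vec n)
    (D : ℝ → Vec n)
    (U : ℝ → Set (Vec k)) (E : Set (Vec n × Vec n))
    (L : ℝ → Vec n → Vec k → ℝ)
    (x : ℝ → Vec n) (u : ℝ → Vec k) : Prop :=
  AEStronglyMeasurable u (volume.restrict (Icc a b)) ∧
  (∀ᵐ t ∂(volume.restrict (Icc a b)), u t ∈ U t) ∧
  (∃ x' : ℝ → Vec n, IntegrableOn x' (Icc a b) ∧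
    (∀ t ∈ Icc a b, x t = x a + ∫ s in a..t, x' s) ∧
    (∀ᵐ t ∂(volume.restrict (Icc a b)), x' t = A t (x t) + B t (u t))) ∧
  (∀ t ∈ Icc a b, ⟪D t, x t⟫_ℝ ≤ 0) ∧
  (x a, x b) ∈ E ∧
  IntegrableOn (fun t => L t (x t) (u t)) (Icc a b)

/-- The cost of a process. -/
def costLC {n k : ℕ} (a b : ℝ) (l : Vec n → Vec n → ℝ) (L : ℝ → Vec n → Vec k → ℝ)
    (x : ℝ → Vec n) (u : ℝ → Vec k) : ℝ :=
  l (x a) (x b) + ∫ t in a..b, L t (x t) (u t)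

lemma fub_triangle {n : ℕ} {a b : ℝ} (ν : Measure ℝ) [IsFiniteMeasure ν]
    (hν : ∀ᵐ s ∂ν, s ∈ Icc a b)
    {h : ℝ → Vec n} (hh : Integrable h ν)
    {δ : ℝ → Vec n} (hδ : IntegrableOn δ (Icc a b)) :
    ∫ t in Icc a b, ⟪∫ s in Ico a t, h s ∂ν, δ t⟫_ℝ =
      ∫ s, ⟪h s, ∫ t in Ioc s b, δ t⟫_ℝ ∂ν := by
  set S : Set (ℝ × ℝ) := {z | a ≤ z.2 ∧ z.2 < z.1} with hSdef
  have hS : MeasurableSet S := by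
    apply MeasurableSet.inter
    · exact measurableSet_le measurable_const measurable_snd
    · exact measurableSet_lt measurable_snd measurable_fst
  set G : ℝ × ℝ → ℝ := S.indicator (fun z => ⟪δ z.1, h z.2⟫_ℝ) with hGdef
  have hGm : AEStronglyMeasurable G ((volume.restrict (Icc a b)).prod ν) :=
    ((hδ.aestronglyMeasurable.comp_fst).inner (hh.aestronglyMeasurable.comp_snd)).indicator hS
  have hGi : Integrable G ((volume.restrict (Icc a b)).prod ν) := by
    refine Integrable.mono' (hδ.norm.mul_prod hh.norm) hGm ?_
    filter_upwards with z
    calc ‖G z‖ ≤ ‖⟪δ z.1, h z.2⟫_ℝ‖ := norm_indicator_le_norm_self _ z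
      _ ≤ ‖δ z.1‖ * ‖h z.2‖ := norm_inner_le_norm _ _
  have step1 : ∀ t, ⟪∫ s in Ico a t, h s ∂ν, δ t⟫_ℝ = ∫ s, G (t, s) ∂ν := by
    intro t
    rw [real_inner_comm, ← integral_indicator measurableSet_Ico,
      ← integral_inner (hh.indicator measurableSet_Ico)]
    refine integral_congr_ae (Eventually.of_forall fun s => ?_)
    by_cases hs : s ∈ Ico a t
    · have hz : (t, s) ∈ S := ⟨hs.1, hs.2⟩
      simp [G, hs, indicator_of_mem, hz]
    · have hz : (t, s) ∉ S := fun hz => hs ⟨hz.1, hz.2⟩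
      simp [G, hs, hz]
  have step2 : ∫ t in Icc a b, ⟪∫ s in Ico a t, h s ∂ν, δ t⟫_ℝ
      = ∫ s, (∫ t in Icc a b, G (t, s)) ∂ν := by
    simp_rw [step1]
    exact integral_integral_swap (f := fun t s => G (t, s)) hGi
  rw [step2]
  refine integral_congr_ae (hν.mono fun s hs => ?_)
  have hset : Ioi s ∩ Icc a b = Ioc s b := by
    ext t
    simp only [mem_inter_iff, mem_Ioi, mem_Icc, mem_Ioc]
    constructor
    · rintro ⟨h1, _, h3⟩; exact ⟨h1, h3⟩
    · rintro ⟨h1, h2⟩; exact ⟨h1, hs.1.trans h1.le, h2⟩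
  have : ∀ t, G (t, s) = (Ioi s).indicator (fun t => ⟪δ t, h s⟫_ℝ) t := by
    intro t
    by_cases ht : s < t
    · have hz : (t, s) ∈ S := ⟨hs.1, ht⟩
      simp [G, hz, indicator_of_mem, ht, mem_Ioi]
    · have hz : (t, s) ∉ S := fun hz => ht hz.2
      simp [G, hz, ht, mem_Ioi]
  simp_rw [this]
  rw [integral_indicator measurableSet_Ioi, Measure.restrict_restrict measurableSet_Ioi, hset]
  rw [show (fun x => ⟪δ x, h s⟫_ℝ) = fun x => ⟪h s, δ x⟫_ℝ from funext fun x => real_inner_comm _ _]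
  exact integral_inner (hδ.mono_set (hset ▸ inter_subset_right)) (h s)

/-- for the linear-convex state-constrained problem (LC), the existence of an
absolutely continuous `p` and a finite nonnegative measure `μ` supported on the set where
the state constraint is active along `(x*,u*)`, satisfying the normal (λ₀ = 1)
extremality conditions (i)-(ii) (expressed as convex subgradient inequalities with the
measure-corrected adjoint `q`), is sufficient for `(x*,u*)` to be a global minimizer
among admissible processes of (LC). -/
theorem sufficiency_linear_convex_state_constrained
    {n k : ℕ} (a b : ℝ) (hab : a < b)
    (A : ℝ → Vec n →L[ℝ] Vec n) (B : ℝ → Vec k →L[ℝ] Vec n)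
    (D : ℝ → Vec n)
    (U : ℝ → Set (Vec k)) (E : Set (Vec n × Vec n))
    (l : Vec n → Vec n → ℝ) (L : ℝ → Vec n → Vec k → ℝ)
    (hA : IntegrableOn A (Icc a b))
    (hB : AEStronglyMeasurable B (volume.restrict (Icc a b)))
    (hBbdd : ∃ M : ℝ, ∀ᵐ t ∂(volume.restrict (Icc a b)), ‖B t‖ ≤ M)
    (hD : ContinuousOn D (Icc a b))
    (hEclosed : IsClosed E) (hEconv : Convex ℝ E)
    (hUconv : ∀ t, Convex ℝ (U t))
    (hlconv : ConvexOn ℝ univ (fun q : Vec n × Vec n => l q.1 q.2))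
    (hLconv : ∀ t, ConvexOn ℝ univ (fun q : Vec n × Vec k => L t q.1 q.2))
    -- the reference admissible process
    (xs : ℝ → Vec n) (us : ℝ → Vec k)
    (hadm : AdmissibleLC a b A B D U E L xs us)
    -- the multipliers: an absolutely continuous `p` and a finite nonnegative measure `μ`
    (p p' : ℝ → Vec n)
    (hp'int : IntegrableOn p' (Icc a b))
    (hpAC : ∀ t ∈ Icc a b, p t = p a + ∫ s in a..t, p' s)
    (μ : Measure ℝ) [IsFiniteMeasure μ]
    -- `μ` is supported in `{t ∈ [a,b] : D(t)x*(t) = 0}`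
    (hsupp : μ {t : ℝ | ¬ (t ∈ Icc a b ∧ ⟪D t, xs t⟫_ℝ = 0)} = 0)
    -- the measure-corrected adjoint function `q`
    (q : ℝ → Vec n)
    (hq : ∀ t ∈ Ico a b, q t = p t + ∫ s in Ico a t, D s ∂μ)
    (hqb : q b = p b + ∫ s in Icc a b, D s ∂μ)
    -- (i): a.e. joint subgradient/maximization inequality
    (hi : ∀ᵐ t ∂(volume.restrict (Icc a b)), ∀ x : Vec n, ∀ u ∈ U t,
      ⟪q t, A t x + B t u⟫_ℝ - L t x u ≤
        ⟪q t, A t (xs t) + B t (us t)⟫_ℝ - L t (xs t) (us t) + ⟪-p' t, x - xs t⟫_ℝ)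
    -- (ii): transversality subgradient inequality
    (hii : ∀ xa xb, (xa, xb) ∈ E →
      l xa xb - l (xs a) (xs b) ≥ ⟪p a, xa - xs a⟫_ℝ - ⟪q b, xb - xs b⟫_ℝ) :
    ∀ x u, AdmissibleLC a b A B D U E L x u →
      costLC a b l L xs us ≤ costLC a b l L x u := by
  intro x u hadm2
  obtain ⟨-, husU, ⟨xs', hxs'int, hxsAC, hxs'eq⟩, -, hxsE, hLsint⟩ := hadm
  obtain ⟨-, huU, ⟨x', hx'int, hxAC, hx'eq⟩, hxD, hxE, hLint⟩ := hadm2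
  simp only [costLC]
  have hab' : a ≤ b := hab.le
  have hbI : b ∈ Icc a b := ⟨hab', le_rfl⟩
  -- the difference functions
  have hδint : IntegrableOn (fun t => x' t - xs' t) (Icc a b) := hx'int.sub hxs'int
  have hsubI : ∀ t ∈ Icc a b, Icc a t ⊆ Icc a b := fun t ht => Icc_subset_Icc le_rfl ht.2
  have hII : ∀ (f : ℝ → Vec n), IntegrableOn f (Icc a b) →
      ∀ t ∈ Icc a b, IntervalIntegrable f volume a t := by
    intro f hf t ht
    exact (hf.mono_set (by rw [uIcc_of_le ht.1]; exact hsubI t ht)).intervalIntegrable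
  have hΔrep : ∀ t ∈ Icc a b, x t - xs t = (x a - xs a) + ∫ s in a..t, (x' s - xs' s) := by
    intro t ht
    rw [intervalIntegral.integral_sub (hII x' hx'int t ht) (hII xs' hxs'int t ht),
      hxAC t ht, hxsAC t ht]
    abel
  have hΔIoc : ∀ s ∈ Icc a b,
      (∫ t in Ioc s b, (x' t - xs' t)) = (x b - xs b) - (x s - xs s) := by
    intro s hs
    rw [← intervalIntegral.integral_of_le hs.2, hΔrep b hbI, hΔrep s hs,
      ← intervalIntegral.integral_interval_sub_left (hII _ hδint b hbI) (hII _ hδint s hs)]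
    abel
  -- continuity of the absolutely continuous functions
  have primCont : ∀ (f f' : ℝ → Vec n), IntegrableOn f' (Icc a b) →
      (∀ t ∈ Icc a b, f t = f a + ∫ s in a..t, f' s) → ContinuousOn f (Icc a b) := by
    intro f f' hint hrep
    refine ((continuousOn_const (c := f a)).add
      (intervalIntegral.continuousOn_primitive hint)).congr fun t ht => ?_
    rw [hrep t ht, intervalIntegral.integral_of_le ht.1]; rfl
  have hxc := primCont x x' hx'int hxAC
  have hxsc := primCont xs xs' hxs'int hxsAC
  have hpc := primCont p p' hp'int hpAC
  have hΔc : ContinuousOn (fun t => x t - xs t) (Icc a b) := hxc.sub hxsc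
  obtain ⟨Mp, hMp⟩ := isCompact_Icc.exists_bound_of_continuousOn hpc
  obtain ⟨MΔ, hMΔ⟩ := isCompact_Icc.exists_bound_of_continuousOn hΔc
  obtain ⟨MD, hMD⟩ := isCompact_Icc.exists_bound_of_continuousOn hD
  -- measure μ facts
  have hμmem : ∀ᵐ s ∂μ, s ∈ Icc a b ∧ ⟪D s, xs s⟫_ℝ = 0 := ae_iff.mpr hsupp
  have hμIcc : ∀ᵐ s ∂μ, s ∈ Icc a b := hμmem.mono fun s hs => hs.1
  have hres : μ.restrict (Icc a b) = μ := Measure.restrict_eq_self_of_ae_mem hμIcc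
  have hDμm : AEStronglyMeasurable D μ := by
    rw [← hres]; exact hD.aestronglyMeasurable measurableSet_Icc
  have hDμint : Integrable D μ :=
    Integrable.mono' (integrable_const MD) hDμm (hμIcc.mono fun s hs => hMD s hs)
  -- a.e. facts on [a,b] w.r.t. Lebesgue
  have haeIcc : ∀ᵐ t ∂(volume.restrict (Icc a b)), t ∈ Icc a b :=
    ae_restrict_mem measurableSet_Icc
  have haeIco : ∀ᵐ t ∂(volume.restrict (Icc a b)), t ∈ Ico a b := by
    have hne : ∀ᵐ t ∂(volume.restrict (Icc a b)), t ≠ b :=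
      ae_mono Measure.restrict_le_self (ae_iff.mpr (by simp))
    filter_upwards [haeIcc, hne] with t ht htb
    exact ⟨ht.1, lt_of_le_of_ne ht.2 htb⟩
  -- measurability and bound for g t = ∫_{[a,t)} D dμ
  have hgm : AEStronglyMeasurable (fun t => ∫ s in Ico a t, D s ∂μ)
      (volume.restrict (Icc a b)) := by
    have hS : MeasurableSet {z : ℝ × ℝ | a ≤ z.2 ∧ z.2 < z.1} :=
      (measurableSet_le measurable_const measurable_snd).inter
        (measurableSet_lt measurable_snd measurable_fst)
    have hFm : AEStronglyMeasurable
        ({z : ℝ × ℝ | a ≤ z.2 ∧ z.2 < z.1}.indicator (fun z => D z.2))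
        ((volume.restrict (Icc a b)).prod μ) := (hDμm.comp_snd).indicator hS
    refine hFm.integral_prod_right'.congr (Eventually.of_forall fun t => ?_)
    show (∫ y : ℝ, ({z : ℝ × ℝ | a ≤ z.2 ∧ z.2 < z.1}.indicator (fun z => D z.2) (t, y)) ∂μ)
      = ∫ s in Ico a t, D s ∂μ
    rw [← integral_indicator measurableSet_Ico]
    refine integral_congr_ae (Eventually.of_forall fun s => ?_)
    by_cases hs : s ∈ Ico a t
    · have hz : ((t, s) : ℝ × ℝ) ∈ {z : ℝ × ℝ | a ≤ z.2 ∧ z.2 < z.1} := ⟨hs.1, hs.2⟩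
      simp [hz, hs]
    · have hz : ((t, s) : ℝ × ℝ) ∉ {z : ℝ × ℝ | a ≤ z.2 ∧ z.2 < z.1} :=
        fun hz => hs ⟨hz.1, hz.2⟩
      simp [hz, hs]
  have hgbd : ∀ t, ‖∫ s in Ico a t, D s ∂μ‖ ≤ max MD 0 * (μ univ).toReal := by
    intro t
    rw [← integral_indicator measurableSet_Ico]
    refine norm_integral_le_of_norm_le_const ?_
    filter_upwards [hμIcc] with s hs
    by_cases h : s ∈ Ico a t
    · rw [indicator_of_mem h]; exact (hMD s hs).trans (le_max_left _ _)
    · rw [indicator_of_notMem h]; simp [le_max_right]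
  -- integrability of the three pieces
  have hδm := hδint.aestronglyMeasurable
  have hΔm : AEStronglyMeasurable (fun t => x t - xs t) (volume.restrict (Icc a b)) :=
    hΔc.aestronglyMeasurable measurableSet_Icc
  have hpm : AEStronglyMeasurable p (volume.restrict (Icc a b)) :=
    hpc.aestronglyMeasurable measurableSet_Icc
  have i1 : Integrable (fun t => ⟪p t, x' t - xs' t⟫_ℝ) (volume.restrict (Icc a b)) := by
    refine Integrable.mono' (hδint.norm.const_mul Mp) (hpm.inner hδm) ?_
    filter_upwards [haeIcc] with t ht
    calc ‖⟪p t, x' t - xs' t⟫_ℝ‖ ≤ ‖p t‖ * ‖x' t - xs' t‖ := norm_inner_le_norm _ _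
      _ ≤ Mp * ‖x' t - xs' t‖ := mul_le_mul_of_nonneg_right (hMp t ht) (norm_nonneg _)
  have i2 : Integrable (fun t => ⟪∫ s in Ico a t, D s ∂μ, x' t - xs' t⟫_ℝ)
      (volume.restrict (Icc a b)) := by
    refine Integrable.mono' (hδint.norm.const_mul (max MD 0 * (μ univ).toReal))
      (hgm.inner hδm) ?_
    filter_upwards with t
    calc ‖⟪∫ s in Ico a t, D s ∂μ, x' t - xs' t⟫_ℝ‖
        ≤ ‖∫ s in Ico a t, D s ∂μ‖ * ‖x' t - xs' t‖ := norm_inner_le_norm _ _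
      _ ≤ max MD 0 * (μ univ).toReal * ‖x' t - xs' t‖ :=
          mul_le_mul_of_nonneg_right (hgbd t) (norm_nonneg _)
  have i3 : Integrable (fun t => ⟪p' t, x t - xs t⟫_ℝ) (volume.restrict (Icc a b)) := by
    refine Integrable.mono' (hp'int.norm.mul_const MΔ) (hp'int.aestronglyMeasurable.inner hΔm) ?_
    filter_upwards [haeIcc] with t ht
    calc ‖⟪p' t, x t - xs t⟫_ℝ‖ ≤ ‖p' t‖ * ‖x t - xs t‖ := norm_inner_le_norm _ _
      _ ≤ ‖p' t‖ * MΔ := mul_le_mul_of_nonneg_left (hMΔ t ht) (norm_nonneg _)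
  -- the key a.e. inequality
  have hkey : ∀ᵐ t ∂(volume.restrict (Icc a b)),
      ⟪p t, x' t - xs' t⟫_ℝ + ⟪∫ s in Ico a t, D s ∂μ, x' t - xs' t⟫_ℝ
        + ⟪p' t, x t - xs t⟫_ℝ ≤ L t (x t) (u t) - L t (xs t) (us t) := by
    filter_upwards [hi, hx'eq, hxs'eq, huU, haeIco] with t hit hxt hxst hut htm
    have h1 := hit (x t) (u t) hut
    rw [← hxt, ← hxst] at h1
    have e1 : ⟪p t, x' t - xs' t⟫_ℝ + ⟪∫ s in Ico a t, D s ∂μ, x' t - xs' t⟫_ℝ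
        = ⟪q t, x' t⟫_ℝ - ⟪q t, xs' t⟫_ℝ := by
      rw [hq t htm, ← inner_add_left, inner_sub_right]
    have e2 : ⟪-p' t, x t - xs t⟫_ℝ = -⟪p' t, x t - xs t⟫_ℝ := inner_neg_left _ _
    rw [e2] at h1
    linarith
  have hmono : ∫ t in Icc a b,
        (⟪p t, x' t - xs' t⟫_ℝ + ⟪∫ s in Ico a t, D s ∂μ, x' t - xs' t⟫_ℝ
          + ⟪p' t, x t - xs t⟫_ℝ)
      ≤ ∫ t in Icc a b, (L t (x t) (u t) - L t (xs t) (us t)) :=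
    integral_mono_ae ((i1.add i2).add i3) (hLint.sub hLsint) hkey
  -- Fubini computations
  have hfub1 : ∫ t in Icc a b, ⟪∫ s in Ico a t, p' s ∂(volume.restrict (Icc a b)),
        x' t - xs' t⟫_ℝ
      = ∫ s in Icc a b, ⟪p' s, ∫ t in Ioc s b, (x' t - xs' t)⟫_ℝ :=
    fub_triangle (volume.restrict (Icc a b)) haeIcc hp'int hδint
  have hfub2 : ∫ t in Icc a b, ⟪∫ s in Ico a t, D s ∂μ, x' t - xs' t⟫_ℝ
      = ∫ s, ⟪D s, ∫ t in Ioc s b, (x' t - xs' t)⟫_ℝ ∂μ :=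
    fub_triangle μ hμIcc hDμint hδint
  -- rewrite left side of hfub1
  have hP1 : ∫ t in Icc a b, ⟪∫ s in Ico a t, p' s ∂(volume.restrict (Icc a b)),
        x' t - xs' t⟫_ℝ
      = ∫ t in Icc a b, (⟪p t, x' t - xs' t⟫_ℝ - ⟪p a, x' t - xs' t⟫_ℝ) := by
    refine setIntegral_congr_fun measurableSet_Icc fun t ht => ?_
    have hpt : ∫ s in Ico a t, p' s ∂(volume.restrict (Icc a b)) = p t - p a := by
      rw [Measure.restrict_restrict measurableSet_Ico,
        inter_eq_self_of_subset_left (Ico_subset_Icc_self.trans (hsubI t ht)),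
        integral_Ico_eq_integral_Ioo, ← integral_Ioc_eq_integral_Ioo,
        ← intervalIntegral.integral_of_le ht.1, hpAC t ht]
      abel
    rw [hpt, inner_sub_left]
  have hP2 : ∫ s in Icc a b, ⟪p' s, ∫ t in Ioc s b, (x' t - xs' t)⟫_ℝ
      = ∫ s in Icc a b, (⟪p' s, x b - xs b⟫_ℝ - ⟪p' s, x s - xs s⟫_ℝ) := by
    refine setIntegral_congr_fun measurableSet_Icc fun s hs => ?_
    rw [hΔIoc s hs, inner_sub_right]
  have hsplit1 : ∫ t in Icc a b, (⟪p t, x' t - xs' t⟫_ℝ - ⟪p a, x' t - xs' t⟫_ℝ)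
      = (∫ t in Icc a b, ⟪p t, x' t - xs' t⟫_ℝ)
        - ∫ t in Icc a b, ⟪p a, x' t - xs' t⟫_ℝ :=
    integral_sub i1 (hδint.const_inner _)
  have hsplit2 : ∫ s in Icc a b, (⟪p' s, x b - xs b⟫_ℝ - ⟪p' s, x s - xs s⟫_ℝ)
      = (∫ s in Icc a b, ⟪p' s, x b - xs b⟫_ℝ)
        - ∫ s in Icc a b, ⟪p' s, x s - xs s⟫_ℝ :=
    integral_sub (hp'int.inner_const _) i3
  have hca : ∫ t in Icc a b, ⟪p a, x' t - xs' t⟫_ℝ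
      = ⟪p a, (x b - xs b) - (x a - xs a)⟫_ℝ := by
    rw [integral_inner hδint, integral_Icc_eq_integral_Ioc, hΔIoc a ⟨le_rfl, hab'⟩]
  have hcb : ∫ s in Icc a b, ⟪p' s, x b - xs b⟫_ℝ = ⟪p b - p a, x b - xs b⟫_ℝ := by
    rw [show (fun s => ⟪p' s, x b - xs b⟫_ℝ) = fun s => ⟪x b - xs b, p' s⟫_ℝ from
        funext fun s => real_inner_comm _ _,
      integral_inner hp'int, real_inner_comm]
    congr 1
    rw [integral_Icc_eq_integral_Ioc, ← intervalIntegral.integral_of_le hab', hpAC b hbI]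
    abel
  -- rewrite right side of hfub2
  have hQ2 : ∫ s, ⟪D s, ∫ t in Ioc s b, (x' t - xs' t)⟫_ℝ ∂μ
      = ∫ s, (⟪D s, x b - xs b⟫_ℝ - ⟪D s, x s - xs s⟫_ℝ) ∂μ := by
    refine integral_congr_ae (hμIcc.mono fun s hs => ?_)
    show ⟪D s, ∫ t in Ioc s b, (x' t - xs' t)⟫_ℝ
      = ⟪D s, x b - xs b⟫_ℝ - ⟪D s, x s - xs s⟫_ℝ
    rw [hΔIoc s hs, inner_sub_right]
  have hDΔint : Integrable (fun s => ⟪D s, x s - xs s⟫_ℝ) μ := by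
    have hΔμm : AEStronglyMeasurable (fun t => x t - xs t) μ := by
      rw [← hres]; exact hΔc.aestronglyMeasurable measurableSet_Icc
    refine Integrable.mono' (integrable_const (max MD 0 * MΔ)) (hDμm.inner hΔμm) ?_
    filter_upwards [hμIcc] with s hs
    calc ‖⟪D s, x s - xs s⟫_ℝ‖ ≤ ‖D s‖ * ‖x s - xs s‖ := norm_inner_le_norm _ _
      _ ≤ max MD 0 * MΔ := by
          refine mul_le_mul ((hMD s hs).trans (le_max_left _ _)) (hMΔ s hs)
            (norm_nonneg _) (le_max_right _ _)
  have hsplitμ : ∫ s, (⟪D s, x b - xs b⟫_ℝ - ⟪D s, x s - xs s⟫_ℝ) ∂μ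
      = ⟪∫ s, D s ∂μ, x b - xs b⟫_ℝ - ∫ s, ⟪D s, x s - xs s⟫_ℝ ∂μ := by
    rw [integral_sub (hDμint.inner_const _) hDΔint]
    congr 1
    rw [show (fun s => ⟪D s, x b - xs b⟫_ℝ) = fun s => ⟪x b - xs b, D s⟫_ℝ from
        funext fun s => real_inner_comm _ _,
      integral_inner hDμint, real_inner_comm]
  -- sign of the μ-term
  have hsign : ∫ s, ⟪D s, x s - xs s⟫_ℝ ∂μ ≤ 0 := by
    refine integral_nonpos_of_ae ?_
    filter_upwards [hμmem] with s hs
    have : ⟪D s, x s - xs s⟫_ℝ = ⟪D s, x s⟫_ℝ - ⟪D s, xs s⟫_ℝ := inner_sub_right _ _ _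
    rw [this, hs.2, sub_zero]
    exact hxD s hs.1
  -- total value of the integral
  have hval : ∫ t in Icc a b,
        (⟪p t, x' t - xs' t⟫_ℝ + ⟪∫ s in Ico a t, D s ∂μ, x' t - xs' t⟫_ℝ
          + ⟪p' t, x t - xs t⟫_ℝ)
      = ⟪q b, x b - xs b⟫_ℝ - ⟪p a, x a - xs a⟫_ℝ - ∫ s, ⟪D s, x s - xs s⟫_ℝ ∂μ := by
    have i12 : Integrable (fun t => ⟪p t, x' t - xs' t⟫_ℝ
        + ⟪∫ s in Ico a t, D s ∂μ, x' t - xs' t⟫_ℝ) (volume.restrict (Icc a b)) := i1.add i2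
    have hadd1 : ∫ t in Icc a b,
          (⟪p t, x' t - xs' t⟫_ℝ + ⟪∫ s in Ico a t, D s ∂μ, x' t - xs' t⟫_ℝ
            + ⟪p' t, x t - xs t⟫_ℝ)
        = (∫ t in Icc a b, (⟪p t, x' t - xs' t⟫_ℝ
            + ⟪∫ s in Ico a t, D s ∂μ, x' t - xs' t⟫_ℝ))
          + ∫ t in Icc a b, ⟪p' t, x t - xs t⟫_ℝ := integral_add i12 i3
    have hadd2 : ∫ t in Icc a b,
          (⟪p t, x' t - xs' t⟫_ℝ + ⟪∫ s in Ico a t, D s ∂μ, x' t - xs' t⟫_ℝ)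
        = (∫ t in Icc a b, ⟪p t, x' t - xs' t⟫_ℝ)
          + ∫ t in Icc a b, ⟪∫ s in Ico a t, D s ∂μ, x' t - xs' t⟫_ℝ := integral_add i1 i2
    have eqA := hfub1
    rw [hP1, hsplit1, hca, hP2, hsplit2, hcb] at eqA
    have eqB := hfub2
    rw [hQ2, hsplitμ] at eqB
    have hqbb : ⟪q b, x b - xs b⟫_ℝ
        = ⟪p b, x b - xs b⟫_ℝ + ⟪∫ s, D s ∂μ, x b - xs b⟫_ℝ := by
      rw [hqb, inner_add_left, hres]
    have hCa : ⟪p a, (x b - xs b) - (x a - xs a)⟫_ℝ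
        = ⟪p a, x b - xs b⟫_ℝ - ⟪p a, x a - xs a⟫_ℝ := inner_sub_right _ _ _
    have hCb : ⟪p b - p a, x b - xs b⟫_ℝ
        = ⟪p b, x b - xs b⟫_ℝ - ⟪p a, x b - xs b⟫_ℝ := inner_sub_left _ _ _
    rw [hCa, hCb] at eqA
    linarith [eqA, eqB, hqbb, hadd1, hadd2]
  -- endpoint inequality
  have hend := hii (x a) (x b) hxE
  -- put everything together
  have hIcc1 : ∫ t in a..b, L t (x t) (u t) = ∫ t in Icc a b, L t (x t) (u t) := by
    rw [intervalIntegral.integral_of_le hab', integral_Icc_eq_integral_Ioc]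
  have hIcc2 : ∫ t in a..b, L t (xs t) (us t) = ∫ t in Icc a b, L t (xs t) (us t) := by
    rw [intervalIntegral.integral_of_le hab', integral_Icc_eq_integral_Ioc]
  have hsub : ∫ t in Icc a b, (L t (x t) (u t) - L t (xs t) (us t))
      = (∫ t in Icc a b, L t (x t) (u t)) - ∫ t in Icc a b, L t (xs t) (us t) :=
    integral_sub hLint hLsint
  rw [hIcc1, hIcc2]
  linarith [hmono, hval, hsign, hsub, hend]
end
end

section
/- There do not exist a scalar λ₀ ≥ 0, an absolutely continuous function p : [0,1] → ℝ, and a measurable function e : [0,1] → ℝ with e(t) ∈ [−1,1] for a.e. t, such that p(1) = 0, ṗ(t) = λ₀(1 + e(t)) for a.e. t ∈ [0,1], 4p(t) + λ₀ e(t) = 0 for a.e. t ∈ [0,1], and λ₀ + sup_{t ∈ [0,1]} |p(t)| > 0. -/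
open MeasureTheory Set Filter

noncomputable section

/-- there is no choice of multipliers `λ₀ ≥ 0`, absolutely continuous
`p : [0,1] → ℝ` (encoded via an integrable derivative `p'` and the integral
representation), and measurable `e : [0,1] → ℝ` with `e(t) ∈ [-1,1]` a.e., such that
`p(1) = 0`, `ṗ(t) = λ₀(1 + e(t))` a.e., `4p(t) + λ₀ e(t) = 0` a.e., and
`λ₀ + sup_{t ∈ [0,1]} |p(t)| > 0`. -/
theorem no_multipliers_for_zero_process :
    ¬ ∃ (lam : ℝ) (p p' e : ℝ → ℝ),
      0 ≤ lam ∧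
      IntegrableOn p' (Icc (0:ℝ) 1) ∧
      (∀ t ∈ Icc (0:ℝ) 1, p t = p 0 + ∫ s in (0:ℝ)..t, p' s) ∧
      AEStronglyMeasurable e (volume.restrict (Icc (0:ℝ) 1)) ∧
      (∀ᵐ t ∂(volume.restrict (Icc (0:ℝ) 1)), e t ∈ Icc (-1:ℝ) 1) ∧
      p 1 = 0 ∧
      (∀ᵐ t ∂(volume.restrict (Icc (0:ℝ) 1)), p' t = lam * (1 + e t)) ∧
      (∀ᵐ t ∂(volume.restrict (Icc (0:ℝ) 1)), 4 * p t + lam * e t = 0) ∧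
      0 < lam + ⨆ t : Icc (0:ℝ) 1, |p (t : ℝ)| := by
  rintro ⟨lam, p, p', e, hlam, hp'int, hrep, he_meas, he_bd, hp1, hode, hstat, hpos⟩
  have hint : ∀ a ∈ Icc (0:ℝ) 1, ∀ b ∈ Icc (0:ℝ) 1, IntervalIntegrable p' volume a b := by
    intro a ha b hb
    exact (hp'int.mono_set (uIcc_subset_Icc ha hb)).intervalIntegrable
  -- p t = - ∫ t..1 p'
  have hpt : ∀ t ∈ Icc (0:ℝ) 1, p t = -∫ s in t..1, p' s := by
    intro t ht
    have h1 : p 1 = p 0 + ∫ s in (0:ℝ)..1, p' s := hrep 1 (by norm_num)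
    have h2 : p t = p 0 + ∫ s in (0:ℝ)..t, p' s := hrep t ht
    have hadd : (∫ s in (0:ℝ)..t, p' s) + ∫ s in t..1, p' s = ∫ s in (0:ℝ)..1, p' s :=
      intervalIntegral.integral_add_adjacent_intervals
        (hint 0 (by norm_num) t ht) (hint t ht 1 (by norm_num))
    have := hp1
    rw [h1] at this
    rw [h2]; linarith
  rcases eq_or_lt_of_le hlam with hlam0 | hlam0
  · -- lam = 0 : p' = 0 a.e., p constant = 0, sup = 0
    have hp'0 : ∀ᵐ t ∂(volume.restrict (Icc (0:ℝ) 1)), p' t = 0 := by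
      filter_upwards [hode] with t ht
      rw [ht, ← hlam0]; ring
    have hI0 : ∀ t ∈ Icc (0:ℝ) 1, (∫ s in (0:ℝ)..t, p' s) = 0 := by
      intro t ht
      have hsub : Icc (0:ℝ) t ⊆ Icc 0 1 := Icc_subset_Icc le_rfl ht.2
      have h0 : ∀ᵐ s ∂(volume.restrict (Icc (0:ℝ) t)), p' s = 0 :=
        ae_restrict_of_ae_restrict_of_subset hsub hp'0
      rw [intervalIntegral.integral_of_le ht.1]
      exact integral_eq_zero_of_ae
        ((ae_restrict_of_ae_restrict_of_subset Ioc_subset_Icc_self h0).mono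
          fun s hs => hs)
    have hp0 : p 0 = 0 := by
      have h1 : p 1 = p 0 + ∫ s in (0:ℝ)..1, p' s := hrep 1 (by norm_num)
      rw [hI0 1 (by norm_num)] at h1
      linarith [hp1]
    have hpz : ∀ t ∈ Icc (0:ℝ) 1, p t = 0 := by
      intro t ht
      rw [hrep t ht, hI0 t ht, hp0]; ring
    have hsup : (⨆ t : Icc (0:ℝ) 1, |p (t : ℝ)|) = 0 := by
      haveI : Nonempty (Icc (0:ℝ) 1) := ⟨⟨0, by norm_num⟩⟩
      have : (fun t : Icc (0:ℝ) 1 => |p (t : ℝ)|) = fun _ => 0 := by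
        funext t; rw [hpz t t.2]; simp
      rw [this, ciSup_const]
    rw [hsup, ← hlam0] at hpos
    norm_num at hpos
  · -- lam > 0
    have hmem : ∀ᵐ t ∂(volume.restrict (Icc (0:ℝ) 1)), t ∈ Icc (0:ℝ) 1 :=
      ae_restrict_mem measurableSet_Icc
    -- Step 1: p' ≥ 0 a.e., hence p ≤ 0 on [0,1]
    have hp'nn : ∀ᵐ t ∂(volume.restrict (Icc (0:ℝ) 1)), 0 ≤ p' t := by
      filter_upwards [hode, he_bd] with t h1 h2
      rw [h1]; nlinarith [h2.1]
    have hple : ∀ t ∈ Icc (0:ℝ) 1, p t ≤ 0 := by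
      intro t ht
      rw [hpt t ht]
      have : 0 ≤ ∫ s in t..1, p' s := by
        apply intervalIntegral.integral_nonneg_of_ae_restrict ht.2
        exact ae_restrict_of_ae_restrict_of_subset (Icc_subset_Icc ht.1 le_rfl) hp'nn
      linarith
    -- Step 2: e ≥ 0 a.e., so p' ≥ lam a.e.
    have hp'ge : ∀ᵐ t ∂(volume.restrict (Icc (0:ℝ) 1)), lam ≤ p' t := by
      filter_upwards [hode, hstat, hmem] with t h1 h2 h3
      have hpt0 : p t ≤ 0 := hple t h3
      have he0 : 0 ≤ e t := by nlinarith
      rw [h1]; nlinarith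
    -- Step 3: p t ≤ -lam*(1-t)
    have hkey : ∀ t ∈ Icc (0:ℝ) 1, p t ≤ -(lam * (1 - t)) := by
      intro t ht
      rw [hpt t ht]
      have h1 : (∫ s in t..1, (lam : ℝ)) ≤ ∫ s in t..1, p' s := by
        apply intervalIntegral.integral_mono_ae_restrict ht.2
          intervalIntegrable_const (hint t ht 1 (by norm_num))
        exact ae_restrict_of_ae_restrict_of_subset (Icc_subset_Icc ht.1 le_rfl) hp'ge
      rw [intervalIntegral.integral_const] at h1
      simp only [smul_eq_mul] at h1
      nlinarith
    -- Step 4: a.e. t, t ≥ 3/4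
    have hae : ∀ᵐ t ∂(volume.restrict (Icc (0:ℝ) 1)), (3:ℝ)/4 ≤ t := by
      filter_upwards [hstat, he_bd, hmem] with t h1 h2 h3
      have h4 : p t ≤ -(lam * (1 - t)) := hkey t h3
      have h5 : lam * e t = -(4 * p t) := by linarith
      have h6 : lam * e t ≤ lam * 1 := mul_le_mul_of_nonneg_left h2.2 hlam
      nlinarith
    rw [ae_restrict_iff' measurableSet_Icc] at hae
    have hsub : Ico (0:ℝ) (3/4) ⊆ {t : ℝ | ¬ (t ∈ Icc (0:ℝ) 1 → (3:ℝ)/4 ≤ t)} := by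
      intro t ht
      simp only [mem_setOf_eq, not_forall]
      exact ⟨⟨ht.1, by linarith [ht.2]⟩, by push_neg; exact ht.2⟩
    have := measure_mono_null hsub hae
    rw [Real.volume_Ico] at this
    norm_num at this
end
end
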